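/- arXiv:2008.00124 — 2 statements merged into one kernel-verified Lean document; each statement's English description precedes it below -/
import Mathlib

section
/- Let $\vec N_t = (N_{1,t},\dots,N_{d,t})$ be a $d$-dimensional point process satisfying $\vec N(nt)/n \to \vec{\bar\lambda} t$ almost surely as $n\to\infty$, and for each $i$ let $(X_{i,k})_k$ be independent ergodic finite-state Markov chains with stationary distributions $\pi_i^*$, and $a_i$ bounded functions with $a_i^* = \sum_j \pi^*_{i,j} a_i(j)$. Define $S_{i,t} = S_{i,0} + \sum_{k=1}^{N_{i,t}} a_i(X_{i,k})$. Then componentwise $\vec S_{nt}/n \to \tilde a^* \vec{\bar\lambda} t$ almost surely as $n\to\infty$, where $\tilde a^* = \mathrm{diag}(a_1^*,\dots,a_d^*)$. -/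
open MeasureTheory ProbabilityTheory Filter Finset Topology

noncomputable section

/-- Convergence in law (weak convergence of distributions) of a sequence of
`E`-valued random elements to a limiting random element. -/
def TendstoInLaw {Ω Ω' E : Type*} [MeasurableSpace Ω] [MeasurableSpace Ω'] [TopologicalSpace E]
    (μ : Measure Ω) (f : ℕ → Ω → E) (ν : Measure Ω') (g : Ω' → E) : Prop :=
  ∀ h : BoundedContinuousFunction E ℝ,
    Tendsto (fun n => ∫ ω, h (f n ω) ∂μ) atTop (𝓝 (∫ ω', h (g ω') ∂ν))

/-- A standard one-dimensional Brownian motion (for times `t ≥ 0`). -/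
def IsStandardBM {Ω : Type*} [MeasurableSpace Ω] (ν : Measure Ω) (W : ℝ → Ω → ℝ) : Prop :=
  (∀ ω, W 0 ω = 0) ∧ (∀ ω, Continuous fun t => W t ω) ∧
  (∀ s t : ℝ, 0 ≤ s → s < t →
      Measure.map (fun ω => W t ω - W s ω) ν = gaussianReal 0 (Real.toNNReal (t - s))) ∧
  (∀ (m : ℕ) (u : ℕ → ℝ), Monotone u → (∀ k, 0 ≤ u k) →
      iIndepFun
        (fun k : Fin m => fun ω => W (u (k.1 + 1)) ω - W (u k.1) ω) ν)

/-- A standard `d`-dimensional Brownian motion: independent standard BM components. -/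
def IsStandardBMd {Ω : Type*} [MeasurableSpace Ω] (d : ℕ) (ν : Measure Ω)
    (W : ℝ → Ω → Fin d → ℝ) : Prop :=
  (∀ i, IsStandardBM ν (fun t ω => W t ω i)) ∧
  iIndepFun (fun i : Fin d => fun ω => fun t : ℝ => W t ω i) ν

/-- A homogeneous Poisson process with rate `lam` (for times `t ≥ 0`). -/
def IsPoissonProcess {Ω : Type*} [MeasurableSpace Ω] (μ : Measure Ω) (lam : ℝ)
    (N : ℝ → Ω → ℕ) : Prop :=
  (∀ ω, N 0 ω = 0) ∧ (∀ ω, Monotone fun t => N t ω) ∧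
  (∀ s t : ℝ, 0 ≤ s → s < t →
      Measure.map (fun ω => N t ω - N s ω) μ
        = (poissonPMF (Real.toNNReal (lam * (t - s)))).toMeasure) ∧
  (∀ (m : ℕ) (u : ℕ → ℝ), Monotone u → (∀ k, 0 ≤ u k) →
      iIndepFun
        (fun k : Fin m => fun ω => N (u (k.1 + 1)) ω - N (u k.1) ω) μ)

/-- LLN for the multivariate general compound point process (MGCPP):
componentwise `S_i(nt)/n → a_i* λ̄_i t` almost surely. -/
theorem mgcpp_lln
    {Ω : Type*} [MeasurableSpace Ω] (μ : Measure Ω) [IsProbabilityMeasure μ]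
    {d : ℕ} {α : Fin d → Type*} [∀ i, Fintype (α i)] [∀ i, MeasurableSpace (α i)]
    (X : ∀ i : Fin d, ℕ → Ω → α i) (a : ∀ i : Fin d, α i → ℝ) (astar : Fin d → ℝ)
    (hXindep : iIndepFun
      (fun i : Fin d => fun ω => fun k : ℕ => X i k ω) μ)
    (hSLLN : ∀ i, ∀ᵐ ω ∂μ, Tendsto
      (fun n : ℕ => (∑ k ∈ Finset.range n, a i (X i k ω)) / (n : ℝ)) atTop (𝓝 (astar i)))
    (N : Fin d → ℝ → Ω → ℕ) (lam : Fin d → ℝ)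
    (hN0 : ∀ i ω, N i 0 ω = 0)
    (hNmono : ∀ i ω, Monotone fun t => N i t ω)
    (hLLN : ∀ i, ∀ t : ℝ, 0 ≤ t → ∀ᵐ ω ∂μ,
      Tendsto (fun n : ℕ => (N i ((n : ℝ) * t) ω : ℝ) / (n : ℝ)) atTop (𝓝 (lam i * t)))
    (S0 : Fin d → ℝ) (S : Fin d → ℝ → Ω → ℝ)
    (hS : ∀ i t ω, S i t ω = S0 i + ∑ k ∈ Finset.range (N i t ω), a i (X i k ω)) :
    ∀ t : ℝ, 0 ≤ t → ∀ i : Fin d, ∀ᵐ ω ∂μ,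
      Tendsto (fun n : ℕ => S i ((n : ℝ) * t) ω / (n : ℝ)) atTop
        (𝓝 (astar i * (lam i * t))) := by


  intro t ht i
  filter_upwards [hSLLN i, hLLN i t ht] with ω h1 h2
  set Nn : ℕ → ℕ := fun n => N i ((n : ℝ) * t) ω with hNn
  set A : ℕ → ℝ := fun m => ∑ k ∈ Finset.range m, a i (X i k ω) with hA
  have hS0 : Tendsto (fun n : ℕ => S0 i / (n : ℝ)) atTop (𝓝 0) :=
    tendsto_const_nhds.div_atTop tendsto_natCast_atTop_atTop
  have key : Tendsto (fun n : ℕ => A (Nn n) / (n : ℝ)) atTop (𝓝 (astar i * (lam i * t))) := by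
    have hlamt : 0 ≤ lam i * t := by
      refine le_of_tendsto_of_tendsto' tendsto_const_nhds h2 (fun n => by positivity)
    rcases eq_or_lt_of_le hlamt with h0 | hpos
    · -- limit is zero; use a bound on |a|
      have hCb : ∀ x, |a i x| ≤ ∑ j, |a i j| := fun x =>
        Finset.single_le_sum (f := fun j => |a i j|) (fun _ _ => abs_nonneg _) (Finset.mem_univ x)
      set C : ℝ := ∑ j, |a i j| with hC
      have hC0 : 0 ≤ C := Finset.sum_nonneg fun _ _ => abs_nonneg _
      have hbound : ∀ n : ℕ, ‖A (Nn n) / (n : ℝ)‖ ≤ C * ((Nn n : ℝ) / n) := by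
        intro n
        have h1 : |A (Nn n)| ≤ C * (Nn n : ℝ) := by
          calc |A (Nn n)| ≤ ∑ k ∈ Finset.range (Nn n), |a i (X i k ω)| :=
                Finset.abs_sum_le_sum_abs _ _
            _ ≤ ∑ _k ∈ Finset.range (Nn n), C := Finset.sum_le_sum fun k _ => hCb _
            _ = C * (Nn n : ℝ) := by simp [mul_comm]
        rw [Real.norm_eq_abs, abs_div, abs_of_nonneg (by positivity : (0:ℝ) ≤ (n:ℝ)),
          ← mul_div_assoc]
        gcongr
      have hg : Tendsto (fun n : ℕ => C * ((Nn n : ℝ) / n)) atTop (𝓝 0) := by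
        have := h2.const_mul C
        rw [← h0, mul_zero] at this
        exact this
      rw [← h0, mul_zero]
      exact squeeze_zero_norm hbound hg
    · -- positive limit: N(nt) → ∞
      have hNtop : Tendsto Nn atTop atTop := by
        rw [← tendsto_natCast_atTop_iff (R := ℝ)]
        have hmul : Tendsto (fun n : ℕ => ((Nn n : ℝ) / n) * (n : ℝ)) atTop atTop :=
          h2.pos_mul_atTop hpos tendsto_natCast_atTop_atTop
        refine hmul.congr' ?_
        filter_upwards [eventually_ge_atTop 1] with n hn
        have hn0 : (n : ℝ) ≠ 0 := by positivity
        field_simp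
      have hcomp : Tendsto (fun n : ℕ => A (Nn n) / (Nn n : ℝ)) atTop (𝓝 (astar i)) :=
        h1.comp hNtop
      have hprod := hcomp.mul h2
      refine hprod.congr' ?_
      filter_upwards [hNtop.eventually_ge_atTop 1] with n hn
      have hN0 : (Nn n : ℝ) ≠ 0 := by
        exact Nat.cast_pos.mpr (lt_of_lt_of_le Nat.zero_lt_one hn) |>.ne'
      rw [div_mul_div_comm, mul_comm (A (Nn n)) ((Nn n : ℝ)), mul_div_mul_left _ _ hN0]
  have hsum := hS0.add key
  rw [zero_add] at hsum
  refine hsum.congr fun n => ?_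
  rw [hS, add_div]
end
end

section
/- Let $P$ be the transition matrix of an ergodic Markov chain on a finite state space, $\Pi^*$ the matrix whose rows are all equal to the stationary distribution $\pi^*$, and $b$ a vector with $\sum_j \pi^*_j b(j) = 0$. Then the matrix $P + \Pi^* - I$ is invertible, so $g := (P + \Pi^* - I)^{-1} b$ is well-defined, and $g$ satisfies the Poisson equation $(I - P) g = -b + \Pi^* g$ restricted appropriately; in particular $(P - I) g = b - \Pi^* b = b$ when additionally $\Pi^* g = 0$ is imposed via the centering of $b$. -/
open Matrix Filter Topology

/-- Fundamental-matrix construction for an ergodic finite-state Markov chain: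
if `P` is the transition matrix, `Π*` the matrix with all rows equal to the stationary
distribution `π*` (ergodicity expressed by `P^n → Π*`), and `b` is centered
(`∑ j, π* j * b j = 0`), then `P + Π* - I` is invertible, and
`g = (P + Π* - I)⁻¹ b` satisfies `Π* g = 0` and the Poisson equation `(P - I) g = b`. -/
theorem fundamental_matrix_poisson_equation
    {ι : Type*} [Fintype ι] [DecidableEq ι] [Nonempty ι]
    (P : Matrix ι ι ℝ) (π : ι → ℝ)
    (hPnonneg : ∀ i j, 0 ≤ P i j) (hProw : ∀ i, ∑ j, P i j = 1)
    (hπnonneg : ∀ j, 0 ≤ π j) (hπsum : ∑ j, π j = 1)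
    (hπstat : Matrix.vecMul π P = π)
    (Pst : Matrix ι ι ℝ) (hPst : ∀ i j, Pst i j = π j)
    (hergodic : Tendsto (fun n : ℕ => P ^ n) atTop (𝓝 Pst))
    (b : ι → ℝ) (hb : ∑ j, π j * b j = 0) :
    IsUnit (P + Pst - 1) ∧
    Pst.mulVec ((P + Pst - 1)⁻¹.mulVec b) = 0 ∧
    (P - 1).mulVec ((P + Pst - 1)⁻¹.mulVec b) = b := by
  -- Π* P = Π*
  have hPstP : Pst * P = Pst := by
    ext i j
    have := congrFun hπstat j
    simp only [Matrix.vecMul, dotProduct] at this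
    simp [Matrix.mul_apply, hPst, this]
  -- Π* Π* = Π*
  have hPstPst : Pst * Pst = Pst := by
    ext i j
    simp only [Matrix.mul_apply, hPst]
    rw [← Finset.sum_mul, hπsum, one_mul]
  -- Π* b = 0
  have hPstb : Pst.mulVec b = 0 := by
    funext i
    simp only [Matrix.mulVec, dotProduct, hPst]
    simpa using hb
  -- convergence of P^n v to Π* v
  have hten : ∀ v : ι → ℝ,
      Tendsto (fun n : ℕ => (P ^ n).mulVec v) atTop (𝓝 (Pst.mulVec v)) := by
    intro v
    have hc : Continuous fun M : Matrix ι ι ℝ => M.mulVec v :=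
      continuous_id.matrix_mulVec continuous_const
    exact (hc.tendsto Pst).comp hergodic
  -- P-fixed vectors are Π*-fixed
  have hfix : ∀ v : ι → ℝ, P.mulVec v = v → Pst.mulVec v = v := by
    intro v hv
    have hpow : ∀ n : ℕ, (P ^ n).mulVec v = v := by
      intro n
      induction n with
      | zero => simp
      | succ n ih =>
        rw [pow_succ, ← Matrix.mulVec_mulVec, hv, ih]
    have h1 : Tendsto (fun n : ℕ => (P ^ n).mulVec v) atTop (𝓝 v) := by
      simpa [hpow] using tendsto_const_nhds (x := v) (f := atTop (α := ℕ))
    exact (tendsto_nhds_unique (hten v) h1)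
  set A := P + Pst - 1 with hA
  -- invertibility
  have hdet : A.det ≠ 0 := by
    intro h
    obtain ⟨v, hv0, hAv⟩ := (Matrix.exists_mulVec_eq_zero_iff).mpr h
    have heq : P.mulVec v + Pst.mulVec v - v = 0 := by
      simpa [hA, Matrix.sub_mulVec, Matrix.add_mulVec] using hAv
    -- apply Π*
    have hPstv : Pst.mulVec v = 0 := by
      have := congrArg (Pst.mulVec) heq
      rw [Matrix.mulVec_sub, Matrix.mulVec_add, Matrix.mulVec_mulVec, hPstP,
        Matrix.mulVec_mulVec, hPstPst] at this
      simpa using this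
    have hPv : P.mulVec v = v := by
      have h2 : P.mulVec v - v = 0 := by
        have := heq
        rw [hPstv] at this
        simpa using this
      exact sub_eq_zero.mp h2
    exact hv0 (by rw [← hfix v hPv, hPstv])
  have hunit : IsUnit A := (Matrix.isUnit_iff_isUnit_det A).mpr (isUnit_iff_ne_zero.mpr hdet)
  have key : ∀ g : ι → ℝ, A.mulVec g = b → Pst.mulVec g = 0 ∧ (P - 1).mulVec g = b := by
    intro g hAg
    have heq : P.mulVec g + Pst.mulVec g - g = b := by
      simpa [hA, Matrix.sub_mulVec, Matrix.add_mulVec] using hAg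
    have hPstg : Pst.mulVec g = 0 := by
      have := congrArg (Pst.mulVec) heq
      rw [Matrix.mulVec_sub, Matrix.mulVec_add, Matrix.mulVec_mulVec, hPstP,
        Matrix.mulVec_mulVec, hPstPst, hPstb] at this
      simpa using this
    refine ⟨hPstg, ?_⟩
    have h2 : P.mulVec g - g = b := by
      have := heq
      rw [hPstg] at this
      simpa using this
    simpa [Matrix.sub_mulVec] using h2
  have hAg : A.mulVec (A⁻¹.mulVec b) = b := by
    rw [Matrix.mulVec_mulVec, Matrix.mul_nonsing_inv A (isUnit_iff_ne_zero.mpr hdet),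
      Matrix.one_mulVec]
  obtain ⟨h1, h2⟩ := key _ hAg
  exact ⟨hunit, h1, h2⟩
end
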